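/- arXiv:1510.02554 — 2 statements merged into one kernel-verified Lean document; each statement's English description precedes it below -/
import Mathlib

section
/- For every Gauss code D with n ≥ 1 chords there exists a set S of chords of D with |S| ≤ (n − 1)/2 such that the Gauss code obtained from D by the crossing change at S is descending; consequently u(D) ≤ (n − 1)/2. -/
/-!
Gauss codes for welded knots.

A Gauss code is a cyclic word in which each chord label occurs exactly twice,
once as a tail (`isHead = false`) and once as a head (`isHead = true`), both
occurrences carrying the common sign of the chord.  We represent the cyclic
word by a linear list of entries, working up to rotation (`List.rotate`) and
injective relabelling of the chords.
-/

/-- An endpoint of a chord: `(chord label, isHead, sign)`, where `isHead = false`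
means a tail (over-passing) endpoint and `isHead = true` a head (under-passing)
endpoint, and the sign `true`/`false` stands for `+1`/`-1`. -/
abbrev GEntry : Type := ℕ × Bool × Bool

/-- A (linear representative of a cyclic) word of endpoints. -/
abbrev GWord : Type := List GEntry

/-- The set of chord labels occurring in a word. -/
def chordSet (w : GWord) : Set ℕ := {a | ∃ e ∈ w, e.1 = a}

/-- `w` is a Gauss code: every chord label that occurs in `w` occurs exactly
twice, once as a tail and once as a head, with a common sign. -/
def IsGaussCode (w : GWord) : Prop :=
  ∀ a ∈ chordSet w,
    w.countP (fun e => e.1 == a) = 2 ∧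
    ∃ s : Bool, (a, false, s) ∈ w ∧ (a, true, s) ∈ w

/-- The crossing change at the set `S` of chords: at every chord of `S`, the
tail and head markings of its two occurrences are exchanged and its sign is
reversed. -/
def crossingChange (S : Finset ℕ) (w : GWord) : GWord :=
  w.map fun e => if e.1 ∈ S then (e.1, !e.2.1, !e.2.2) else e

/-- Deletion of the chord `a` (both of its endpoints) from the word. -/
def deleteChord (a : ℕ) (w : GWord) : GWord :=
  w.filter fun e => e.1 != a

/-- Equality of words up to cyclic permutation. -/
def RotEq (w w' : GWord) : Prop := ∃ n : ℕ, w' = w.rotate n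

/-- Renaming the chords of a word by `f`. -/
def relabelWord (f : ℕ → ℕ) (w : GWord) : GWord := w.map fun e => (f e.1, e.2)

/-- Equality of words up to cyclic permutation and (injective) renaming of
the chords. -/
def CyclicRename (w w' : GWord) : Prop :=
  ∃ (n : ℕ) (f : ℕ → ℕ), Function.Injective f ∧ w' = relabelWord f (w.rotate n)

/-- Raw C1 move (deleting direction): deletion of a chord whose two endpoints
occupy adjacent positions; the inserting direction is the converse relation. -/
def C1delRaw (u v : GWord) : Prop :=
  ∃ (x y : GWord) (a : ℕ) (h s : Bool),
    (∀ e ∈ x ++ y, e.1 ≠ a) ∧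
    u = x ++ (a, h, s) :: (a, !h, s) :: y ∧
    v = x ++ y

/-- Raw W move: interchange of two adjacent endpoints that are both tails
(of any two chords, regardless of signs). -/
def WRaw (u v : GWord) : Prop :=
  ∃ (x y : GWord) (a b : ℕ) (s t : Bool),
    u = x ++ (a, false, s) :: (b, false, t) :: y ∧
    v = x ++ (b, false, t) :: (a, false, s) :: y

/-- Raw C2 move (deleting direction): deletion of a pair of chords of opposite
signs whose two tails occupy adjacent positions and whose two heads occupy
adjacent positions. -/
def C2delRaw (u v : GWord) : Prop :=
  ∃ (x y z : GWord) (a b : ℕ) (s : Bool),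
    a ≠ b ∧
    (∀ e ∈ x ++ y ++ z, e.1 ≠ a ∧ e.1 ≠ b) ∧
    (u = x ++ (a, false, s) :: (b, false, !s) :: (y ++ (a, true, s) :: (b, true, !s) :: z) ∨
     u = x ++ (a, false, s) :: (b, false, !s) :: (y ++ (b, true, !s) :: (a, true, s) :: z)) ∧
    v = x ++ y ++ z

/-- Raw C3 move: the Gauss-code translation of the planar Reidemeister move of
type 3.  Three strands `A`, `B`, `C` (modelled on the lines `y = -1`, `y = x`,
`y = -x` and their directions `(1,0)`, `(1,1)`, `(-1,1)`, possibly reversed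
according to `dA`, `dB`, `dC`) meet pairwise in the chords `a = AB`, `b = AC`,
`c = BC`; `oAB`, `oAC`, `oBC` record which strand passes over in each pair and
must come from a linear height order.  The six endpoints form three adjacent
pairs, one on each strand, and the move exchanges the order within each pair;
the head/tail pattern is determined by the heights and the signs by the heights
and the directions, as in a planar diagram. -/
def C3Raw (u v : GWord) : Prop :=
  ∃ (x y z t : GWord) (a b c : ℕ) (oAB oAC oBC dA dB dC swap : Bool),
    a ≠ b ∧ a ≠ c ∧ b ≠ c ∧
    (oAB = oBC → oAC = oAB) ∧
    (let sa : Bool := (dA == dB) == oAB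
     let sb : Bool := (dA == dC) == oAC
     let sc : Bool := (dB == dC) == oBC
     let PA : GWord :=
       if dA then [(a, !oAB, sa), (b, !oAC, sb)] else [(b, !oAC, sb), (a, !oAB, sa)]
     let PB : GWord :=
       if dB then [(a, oAB, sa), (c, !oBC, sc)] else [(c, !oBC, sc), (a, oAB, sa)]
     let PC : GWord :=
       if dC then [(b, oAC, sb), (c, oBC, sc)] else [(c, oBC, sc), (b, oAC, sb)]
     let Q1 : GWord := if swap then PC else PB
     let Q2 : GWord := if swap then PB else PC
     u = x ++ PA ++ y ++ Q1 ++ z ++ Q2 ++ t ∧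
     v = x ++ PA.reverse ++ y ++ Q1.reverse ++ z ++ Q2.reverse ++ t)

/-- One welded Reidemeister move (C1, C2, C3 or W, in either direction),
performed up to cyclic permutation and renaming of chords. -/
def WeldedStep (u v : GWord) : Prop :=
  ∃ u₀ v₀ : GWord, CyclicRename u u₀ ∧ CyclicRename v₀ v ∧
    (C1delRaw u₀ v₀ ∨ C1delRaw v₀ u₀ ∨ C2delRaw u₀ v₀ ∨ C2delRaw v₀ u₀ ∨
     C3Raw u₀ v₀ ∨ C3Raw v₀ u₀ ∨ WRaw u₀ v₀)

/-- Welded equivalence: two Gauss codes are welded-equivalent if they are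
related by a finite sequence of C1, C2, C3 and W moves (on cyclic words). -/
def WeldedEquiv : GWord → GWord → Prop := Relation.EqvGen WeldedStep

/-- A Gauss code represents the trivial welded knot iff it is
welded-equivalent to the empty code. -/
def RepresentsTrivial (w : GWord) : Prop := WeldedEquiv w []

/-- One C1 or W move (in either direction), up to cyclic permutation and
renaming of chords. -/
def CWStep (u v : GWord) : Prop :=
  ∃ u₀ v₀ : GWord, CyclicRename u u₀ ∧ CyclicRename v₀ v ∧
    (C1delRaw u₀ v₀ ∨ C1delRaw v₀ u₀ ∨ WRaw u₀ v₀)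

/-- Relatedness by a finite sequence of C1 and W moves alone. -/
def CWEquiv : GWord → GWord → Prop := Relation.EqvGen CWStep

/-- One W move, up to cyclic permutation. -/
def WStepRot (u v : GWord) : Prop :=
  ∃ u₀ v₀ : GWord, RotEq u u₀ ∧ RotEq v₀ v ∧ WRaw u₀ v₀

/-- One deleting C1 move, up to cyclic permutation. -/
def C1StepRot (u v : GWord) : Prop :=
  ∃ u₀ v₀ : GWord, RotEq u u₀ ∧ RotEq v₀ v ∧ C1delRaw u₀ v₀

/-- In the linear word `v`, no chord has its head occurring strictly before
its tail. -/
def TailsFirst (v : GWord) : Prop :=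
  ¬ ∃ (x y z : GWord) (a : ℕ) (s s' : Bool),
      v = x ++ (a, true, s) :: (y ++ (a, false, s') :: z)

/-- A Gauss code is descending if the cyclic word can be cut at some point and
read in one of the two directions so that every chord's tail occurs before its
head. -/
def IsDescending (w : GWord) : Prop :=
  ∃ n : ℕ, TailsFirst (w.rotate n) ∨ TailsFirst ((w.rotate n).reverse)

/-- `c(D)`: the minimal number of chords of a Gauss code representing the same
welded knot as `D`. -/
noncomputable def minCrossing (D : GWord) : ℕ :=
  sInf {n : ℕ | ∃ D' : GWord, IsGaussCode D' ∧ WeldedEquiv D D' ∧ (chordSet D').ncard = n}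

/-- `u(D)`: the minimal cardinality of a set `S` of chords of `D` such that the
crossing change at `S` turns `D` into a Gauss code representing the trivial
welded knot. -/
noncomputable def unknottingNumWord (D : GWord) : ℕ :=
  sInf {k : ℕ | ∃ S : Finset ℕ, ↑S ⊆ chordSet D ∧ S.card = k ∧
    WeldedEquiv (crossingChange S D) []}

/-- `u(K)`: the minimum of `u(D')` over all Gauss codes `D'` representing the
same welded knot as `D`. -/
noncomputable def unknottingNum (D : GWord) : ℕ :=
  sInf {k : ℕ | ∃ D' : GWord, IsGaussCode D' ∧ WeldedEquiv D D' ∧ unknottingNumWord D' = k}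
-- Part 0: generic list lemmas
section ListLemmas
variable {α : Type*}

lemma pair_sublist (l : List α) {i j : ℕ} (hij : i < j) (hj : j < l.length) :
    [l[i]'(lt_trans hij hj), l[j]].Sublist l := by
  have hi : i < l.length := lt_trans hij hj
  have hmem : l[j] ∈ l.drop (i+1) := by
    rw [List.mem_iff_getElem]
    refine ⟨j - (i+1), by simp; omega, ?_⟩
    rw [List.getElem_drop]
    congr 1; omega
  have h1 : [l[i]'hi, l[j]].Sublist (l[i]'hi :: l.drop (i+1)) :=
    List.Sublist.cons₂ _ (List.singleton_sublist.mpr hmem)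
  rw [← List.drop_eq_getElem_cons hi] at h1
  exact h1.trans (List.drop_sublist i l)

lemma decomp_of_pair_sublist_aux : ∀ {l₁ l₂ : List α}, l₁.Sublist l₂ → ∀ p q : α,
    l₁ = [p, q] → ∃ x y z, l₂ = x ++ p :: (y ++ q :: z) := by
  intro l₁ l₂ h
  induction h with
  | slnil => intro p q hpq; simp at hpq
  | cons a h ih =>
      intro p q hpq
      obtain ⟨x, y, z, hxyz⟩ := ih p q hpq
      exact ⟨a :: x, y, z, by simp [hxyz]⟩
  | cons_cons a h ih =>
      intro p q hpq
      injection hpq with h1 h2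
      subst h1; subst h2
      have hq := List.singleton_sublist.mp h
      obtain ⟨s, t, rfl⟩ := List.append_of_mem hq
      exact ⟨[], s, t, rfl⟩

lemma decomp_of_pair_sublist {p q : α} {l : List α} (h : [p, q].Sublist l) :
    ∃ x y z, l = x ++ p :: (y ++ q :: z) :=
  decomp_of_pair_sublist_aux h p q rfl

lemma decomp_of_indices (l : List α) {i j : ℕ} (hij : i < j) (hj : j < l.length) :
    ∃ x y z, l = x ++ l[i]'(lt_trans hij hj) :: (y ++ l[j] :: z) ∧
      (∀ e ∈ x, ∃ p, ∃ hp : p < l.length, p < i ∧ e = l[p]) ∧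
      (∀ e ∈ y, ∃ p, ∃ hp : p < l.length, i < p ∧ p < j ∧ e = l[p]) ∧
      (∀ e ∈ z, ∃ p, ∃ hp : p < l.length, j < p ∧ e = l[p]) := by
  have hi : i < l.length := lt_trans hij hj
  refine ⟨l.take i, (l.drop (i+1)).take (j - i - 1), l.drop (j+1), ?_, ?_, ?_, ?_⟩
  · conv_lhs => rw [← List.take_append_drop i l]
    rw [List.drop_eq_getElem_cons hi]
    congr 1
    congr 1
    conv_lhs => rw [← List.take_append_drop (j - i - 1) (l.drop (i+1))]
    congr 1
    rw [List.drop_drop]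
    have : i + 1 + (j - i - 1) = j := by omega
    rw [this, List.drop_eq_getElem_cons hj]
  · intro e he
    obtain ⟨p, hp, hep⟩ := List.mem_iff_getElem.mp he
    have hlen : p < i := by
      have := hp; simp [List.length_take] at this; omega
    exact ⟨p, by omega, hlen, by rw [← hep, List.getElem_take]⟩
  · intro e he
    obtain ⟨p, hp, hep⟩ := List.mem_iff_getElem.mp he
    have hlen : p < j - i - 1 := by
      have := hp; simp [List.length_take, List.length_drop] at this; omega
    refine ⟨i + 1 + p, by omega, by omega, by omega, ?_⟩
    rw [← hep, List.getElem_take, List.getElem_drop]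
  · intro e he
    obtain ⟨p, hp, hep⟩ := List.mem_iff_getElem.mp he
    have hlen : p < l.length - (j+1) := by simpa using hp
    refine ⟨j + 1 + p, by omega, by omega, ?_⟩
    rw [← hep, List.getElem_drop]

end ListLemmas

-- Part 1: TailsFirst and sublists
lemma pair_sublist_of_decomp {p q : GEntry} {x y z : GWord} :
    [p, q].Sublist (x ++ p :: (y ++ q :: z)) := by
  have h1 : [p, q].Sublist (p :: (y ++ q :: z)) := by
    refine List.Sublist.cons₂ _ (List.singleton_sublist.mpr ?_)
    simp
  exact h1.trans (List.sublist_append_right x _)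

lemma tailsFirst_of_sublist {u v : GWord} (h : u.Sublist v) (hv : TailsFirst v) :
    TailsFirst u := by
  intro ⟨x, y, z, a, s, s', hu⟩
  apply hv
  have hp : [((a,true,s) : GEntry), (a,false,s')].Sublist v := by
    refine List.Sublist.trans ?_ h
    rw [hu]; exact pair_sublist_of_decomp
  obtain ⟨x', y', z', hv'⟩ := decomp_of_pair_sublist hp
  exact ⟨x', y', z', a, s, s', hv'⟩

lemma tailsFirst_indices {v : GWord} (hv : TailsFirst v) {i j : ℕ} (hij : i < j)
    (hj : j < v.length) {a : ℕ} {s s' : Bool}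
    (h1 : v[i]'(lt_trans hij hj) = (a, true, s)) (h2 : v[j] = (a, false, s')) : False := by
  apply hv
  obtain ⟨x, y, z, hd, _, _, _⟩ := decomp_of_indices v hij hj
  rw [h1, h2] at hd
  exact ⟨x, y, z, a, s, s', hd⟩

-- tails-first violated gives indices
lemma indices_of_not_tailsFirst {v : GWord} (hv : ¬ TailsFirst v) :
    ∃ (i j : ℕ) (hij : i < j) (hj : j < v.length) (a : ℕ) (s s' : Bool),
      v[i]'(lt_trans hij hj) = (a, true, s) ∧ v[j] = (a, false, s') := by
  rw [TailsFirst, not_not] at hv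
  obtain ⟨x, y, z, a, s, s', hd⟩ := hv
  subst hd
  have hjlt : x.length + 1 + y.length < (x ++ (a, true, s) :: (y ++ (a, false, s') :: z)).length := by
    simp; omega
  refine ⟨x.length, x.length + 1 + y.length, by omega, hjlt, a, s, s', ?_, ?_⟩
  · have h9 : (x ++ (a, true, s) :: (y ++ (a, false, s') :: z))[x.length]? = some (a, true, s) := by
      rw [List.getElem?_append_right (le_refl _)]
      simp
    rw [List.getElem?_eq_getElem (by simp)] at h9
    exact Option.some_injective _ h9
  · have h9 : (x ++ (a, true, s) :: (y ++ (a, false, s') :: z))[x.length + 1 + y.length]? =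
        some (a, false, s') := by
      rw [List.getElem?_append_right (by omega)]
      have h2 : x.length + 1 + y.length - x.length = y.length + 1 := by omega
      rw [h2, List.getElem?_cons_succ, List.getElem?_append_right (le_refl _)]
      simp
    rw [List.getElem?_eq_getElem hjlt] at h9
    exact Option.some_injective _ h9

-- Part 2: locations of a chord's endpoints in a Gauss code
lemma triple_sublist (l : GWord) {i j k : ℕ} (hij : i < j) (hjk : j < k)
    (hk : k < l.length) :
    [l[i]'(by omega), l[j]'(by omega), l[k]].Sublist l := by
  have hi : i < l.length := by omega
  have hmem : [l[j]'(by omega), l[k]].Sublist (l.drop (i+1)) := by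
    have hj' : j - (i+1) < (l.drop (i+1)).length := by simp; omega
    have hk' : k - (i+1) < (l.drop (i+1)).length := by simp; omega
    have e1 : (l.drop (i+1))[j - (i+1)]'hj' = l[j]'(by omega) := by
      rw [List.getElem_drop]; congr 1; omega
    have e2 : (l.drop (i+1))[k - (i+1)]'hk' = l[k] := by
      rw [List.getElem_drop]; congr 1; omega
    have := pair_sublist (l.drop (i+1)) (i := j - (i+1)) (j := k - (i+1)) (by omega) hk'
    rwa [e1, e2] at this
  have h1 : [l[i]'hi, l[j]'(by omega), l[k]].Sublist (l[i]'hi :: l.drop (i+1)) :=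
    List.Sublist.cons₂ _ hmem
  rw [← List.drop_eq_getElem_cons hi] at h1
  exact h1.trans (List.drop_sublist i l)

lemma gauss_loc {w : GWord} (hw : IsGaussCode w) {a : ℕ} (ha : a ∈ chordSet w) :
    ∃ (s : Bool) (i j : ℕ) (hi : i < w.length) (hj : j < w.length),
      w[i] = (a, false, s) ∧ w[j] = (a, true, s) ∧
      ∀ k (hk : k < w.length), (w[k]).1 = a → k = i ∨ k = j := by
  obtain ⟨hcount, s, htl, hhd⟩ := hw a ha
  obtain ⟨i, hi, hwi⟩ := List.mem_iff_getElem.mp htl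
  obtain ⟨j, hj, hwj⟩ := List.mem_iff_getElem.mp hhd
  have hij : i ≠ j := by
    intro h; subst h; rw [hwi] at hwj; simp at hwj
  -- any three distinct positions with label a give countP ≥ 3
  have key : ∀ p q r (hpq : p < q) (hqr : q < r) (hr : r < w.length),
      (w[p]'(by omega)).1 = a → (w[q]'(by omega)).1 = a → (w[r]).1 = a → False := by
    intro p q r hpq hqr hr h1 h2 h3
    have hsub := triple_sublist w hpq hqr hr
    have hle := hsub.countP_le (p := fun e => e.1 == a)
    rw [hcount] at hle
    simp [List.countP_cons, h1, h2, h3] at hle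
  refine ⟨s, i, j, hi, hj, hwi, hwj, ?_⟩
  intro k hk hka
  by_contra hcon
  push_neg at hcon
  obtain ⟨hki, hkj⟩ := hcon
  have h1 : (w[i]).1 = a := by rw [hwi]
  have h2 : (w[j]).1 = a := by rw [hwj]
  rcases Nat.lt_trichotomy i j with h | h | h
  · rcases Nat.lt_trichotomy k i with h' | h' | h'
    · exact key k i j h' h hj hka h1 h2
    · exact hki h'
    · rcases Nat.lt_trichotomy k j with h'' | h'' | h'' 
      · exact key i k j h' h'' hj h1 hka h2
      · exact hkj h''
      · exact key i j k h h'' hk h1 h2 hka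
  · exact hij h
  · rcases Nat.lt_trichotomy k j with h' | h' | h'
    · exact key k j i h' h hi hka h2 h1
    · exact hkj h'
    · rcases Nat.lt_trichotomy k i with h'' | h'' | h''
      · exact key j k i h' h'' hi h2 hka h1
      · exact hki h''
      · exact key j i k h h'' hk h2 h1 hka

-- Part 3: preservation lemmas
lemma chordSet_rotate (w : GWord) (n : ℕ) : chordSet (w.rotate n) = chordSet w := by
  ext a; simp [chordSet, List.mem_rotate]

lemma gauss_rotate {w : GWord} (hw : IsGaussCode w) (n : ℕ) : IsGaussCode (w.rotate n) := by
  intro a ha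
  rw [chordSet_rotate] at ha
  obtain ⟨hc, s, h1, h2⟩ := hw a ha
  exact ⟨by rw [(w.rotate_perm n).countP_eq]; exact hc, s,
    List.mem_rotate.mpr h1, List.mem_rotate.mpr h2⟩

lemma cc_fst (S : Finset ℕ) (e : GEntry) :
    (if e.1 ∈ S then (e.1, !e.2.1, !e.2.2) else e).1 = e.1 := by
  split <;> rfl

lemma chordSet_cc (S : Finset ℕ) (w : GWord) : chordSet (crossingChange S w) = chordSet w := by
  ext a
  simp only [chordSet, crossingChange, Set.mem_setOf_eq, List.mem_map]
  constructor
  · rintro ⟨e, ⟨e', he', rfl⟩, h⟩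
    exact ⟨e', he', by rw [← h, cc_fst]⟩
  · rintro ⟨e, he, h⟩
    exact ⟨_, ⟨e, he, rfl⟩, by rw [cc_fst]; exact h⟩

lemma gauss_cc {w : GWord} (hw : IsGaussCode w) (S : Finset ℕ) :
    IsGaussCode (crossingChange S w) := by
  intro a ha
  rw [chordSet_cc] at ha
  obtain ⟨hc, s, h1, h2⟩ := hw a ha
  constructor
  · rw [crossingChange, List.countP_map, ← hc]
    apply List.countP_congr
    intro e _
    simp [Function.comp, cc_fst]
  · by_cases haS : a ∈ S
    · refine ⟨!s, ?_, ?_⟩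
      · exact List.mem_map.mpr ⟨(a, true, s), h2, by simp [haS]⟩
      · exact List.mem_map.mpr ⟨(a, false, s), h1, by simp [haS]⟩
    · refine ⟨s, ?_, ?_⟩
      · exact List.mem_map.mpr ⟨(a, false, s), h1, by simp [haS]⟩
      · exact List.mem_map.mpr ⟨(a, true, s), h2, by simp [haS]⟩

lemma cc_rotate (S : Finset ℕ) (w : GWord) (n : ℕ) :
    crossingChange S (w.rotate n) = (crossingChange S w).rotate n := by
  rcases Nat.eq_zero_or_pos w.length with h0 | h0
  · have : w = [] := List.length_eq_zero_iff.mp h0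
    subst this; simp [crossingChange]
  · rw [← List.rotate_mod w n, ← List.rotate_mod (crossingChange S w) n]
    have hlen : (crossingChange S w).length = w.length := by simp [crossingChange]
    rw [hlen]
    have h1 : n % w.length ≤ w.length := le_of_lt (Nat.mod_lt _ h0)
    rw [List.rotate_eq_drop_append_take h1, List.rotate_eq_drop_append_take (by rw [hlen]; exact h1)]
    simp [crossingChange, List.map_drop, List.map_take]

lemma length_cc (S : Finset ℕ) (w : GWord) : (crossingChange S w).length = w.length := by
  simp [crossingChange]

lemma getElem_cc (S : Finset ℕ) (w : GWord) (i : ℕ) (h : i < (crossingChange S w).length) :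
    (crossingChange S w)[i] =
      (if (w[i]'(by rwa [length_cc] at h)).1 ∈ S then
        ((w[i]'(by rwa [length_cc] at h)).1, !(w[i]'(by rwa [length_cc] at h)).2.1,
          !(w[i]'(by rwa [length_cc] at h)).2.2)
      else w[i]'(by rwa [length_cc] at h)) := by
  simp [crossingChange]

-- Part 4: welded moves machinery
lemma cyclicRename_refl (w : GWord) : CyclicRename w w := by
  refine ⟨0, id, Function.injective_id, ?_⟩
  simp [relabelWord, List.rotate_zero]

lemma weldedStep_of_c1del {u v : GWord} (h : C1delRaw u v) : WeldedStep u v :=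
  ⟨u, v, cyclicRename_refl u, cyclicRename_refl v, Or.inl h⟩

lemma weldedStep_of_c1ins {u v : GWord} (h : C1delRaw v u) : WeldedStep u v :=
  ⟨u, v, cyclicRename_refl u, cyclicRename_refl v, Or.inr (Or.inl h)⟩

lemma weldedStep_of_w {u v : GWord} (h : WRaw u v) : WeldedStep u v :=
  ⟨u, v, cyclicRename_refl u, cyclicRename_refl v, by tauto⟩

lemma exists_fresh (v : GWord) : ∃ a : ℕ, ∀ e ∈ v, e.1 ≠ a := by
  refine ⟨(v.map Prod.fst).foldr max 0 + 1, ?_⟩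
  intro e he
  have : ∀ (l : List ℕ) (x : ℕ), x ∈ l → x ≤ l.foldr max 0 := by
    intro l
    induction l with
    | nil => intro x hx; simp at hx
    | cons b t ih =>
        intro x hx
        rcases List.mem_cons.mp hx with rfl | hx
        · simp [le_max_iff]
        · simp only [List.foldr_cons, le_max_iff]; right; exact ih x hx
  have h2 : e.1 ∈ v.map Prod.fst := List.mem_map.mpr ⟨e, he, rfl⟩
  have := this _ _ h2
  omega

lemma weldedEquiv_rotate (v : GWord) (k : ℕ) : WeldedEquiv v (v.rotate k) := by
  rcases Nat.eq_zero_or_pos v.length with h0 | h0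
  · have : v = [] := List.length_eq_zero_iff.mp h0
    subst this; simp [List.rotate_nil]; exact Relation.EqvGen.refl _
  obtain ⟨a, ha⟩ := exists_fresh v
  set P : GEntry := (a, false, true) with hP
  set Q : GEntry := (a, true, true) with hQ
  set k' := k % v.length with hk'
  have hk'lt : k' < v.length := Nat.mod_lt _ h0
  have step1 : WeldedStep v (P :: Q :: v) := by
    apply weldedStep_of_c1ins
    exact ⟨[], v, a, false, true, by simpa using ha, rfl, rfl⟩
  have step2 : WeldedStep (P :: Q :: v) (v.rotate k) := by
    refine ⟨v.drop k' ++ P :: Q :: v.take k', v.rotate k', ?_, ?_, ?_⟩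
    · refine ⟨2 + k', id, Function.injective_id, ?_⟩
      have hlen : 2 + k' ≤ (P :: Q :: v).length := by simp; omega
      rw [List.rotate_eq_drop_append_take hlen]
      have h1 : (P :: Q :: v).drop (2 + k') = v.drop k' := by
        simp [List.drop_succ_cons, show 2 + k' = k' + 2 by omega]
      have h2 : (P :: Q :: v).take (2 + k') = P :: Q :: v.take k' := by
        simp [show 2 + k' = k' + 2 by omega]
      rw [h1, h2]
      simp [relabelWord]
    · rw [← List.rotate_mod v k, ← hk']
      exact cyclicRename_refl _
    · left
      refine ⟨v.drop k', v.take k', a, false, true, ?_, rfl, ?_⟩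
      · intro e he
        apply ha
        rcases List.mem_append.mp he with h | h
        · exact List.mem_of_mem_drop h
        · exact List.mem_of_mem_take h
      · rw [List.rotate_eq_drop_append_take (le_of_lt hk'lt)]
  exact Relation.EqvGen.trans _ _ _ (Relation.EqvGen.rel _ _ step1) (Relation.EqvGen.rel _ _ step2)

-- Part 5: bubbling lemmas
lemma bubbleT : ∀ (y x z : GWord) (a : ℕ) (s : Bool),
    (∀ e ∈ y, e.2.1 = false) → (∀ e ∈ x ++ y ++ z, e.1 ≠ a) →
    WeldedEquiv (x ++ (a, false, s) :: (y ++ (a, true, s) :: z)) (x ++ (y ++ z)) := by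
  intro y
  induction y with
  | nil =>
      intro x z a s _ hpure
      apply Relation.EqvGen.rel
      apply weldedStep_of_c1del
      refine ⟨x, z, a, false, s, by simpa using hpure, by simp, by simp⟩
  | cons e y' ih =>
      intro x z a s htails hpure
      have he : e = (e.1, false, e.2.2) := by
        have := htails e (by simp)
        exact Prod.ext rfl (Prod.ext this rfl)
      have step : WeldedStep (x ++ (a, false, s) :: (e :: y' ++ (a, true, s) :: z))
          ((x ++ [e]) ++ (a, false, s) :: (y' ++ (a, true, s) :: z)) := by
        apply weldedStep_of_w
        refine ⟨x, y' ++ (a, true, s) :: z, a, e.1, s, e.2.2, by rw [← he]; simp, by rw [← he]; simp⟩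
      have ihh := ih (x ++ [e]) z a s (fun f hf => htails f (by simp [hf]))
        (by intro f hf; apply hpure; simp at hf ⊢; tauto)
      have : WeldedEquiv (x ++ (a, false, s) :: (e :: y' ++ (a, true, s) :: z))
          ((x ++ [e]) ++ (y' ++ z)) :=
        Relation.EqvGen.trans _ _ _ (Relation.EqvGen.rel _ _ step) ihh
      simpa using this

lemma bubbleH : ∀ (y x z : GWord) (a : ℕ) (s : Bool),
    (∀ e ∈ y, e.2.1 = false) → (∀ e ∈ x ++ y ++ z, e.1 ≠ a) →
    WeldedEquiv (x ++ (a, true, s) :: (y ++ (a, false, s) :: z)) (x ++ (y ++ z)) := by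
  intro y
  induction y using List.reverseRecOn with
  | nil =>
      intro x z a s _ hpure
      apply Relation.EqvGen.rel
      apply weldedStep_of_c1del
      refine ⟨x, z, a, true, s, by simpa using hpure, by simp, by simp⟩
  | append_singleton y' e ih =>
      intro x z a s htails hpure
      have he : e = (e.1, false, e.2.2) := by
        have := htails e (by simp)
        exact Prod.ext rfl (Prod.ext this rfl)
      have step : WeldedStep (x ++ (a, true, s) :: ((y' ++ [e]) ++ (a, false, s) :: z))
          (x ++ (a, true, s) :: (y' ++ (a, false, s) :: (e :: z))) := by
        apply weldedStep_of_w
        refine ⟨x ++ (a, true, s) :: y', z, e.1, a, e.2.2, s, by rw [← he]; simp, by rw [← he]; simp⟩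
      have ihh := ih x (e :: z) a s (fun f hf => htails f (by simp [hf]))
        (by intro f hf; apply hpure; simp at hf ⊢; tauto)
      have : WeldedEquiv (x ++ (a, true, s) :: ((y' ++ [e]) ++ (a, false, s) :: z))
          (x ++ (y' ++ (e :: z))) :=
        Relation.EqvGen.trans _ _ _ (Relation.EqvGen.rel _ _ step) ihh
      simpa using this

-- Part 6: deletion preserves Gauss codes
lemma gauss_delete {x y z : GWord} {a : ℕ} {p q : GEntry} (hp : p.1 = a) (hq : q.1 = a)
    (hg : IsGaussCode (x ++ p :: (y ++ q :: z))) (hpure : ∀ e ∈ x ++ y ++ z, e.1 ≠ a) :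
    IsGaussCode (x ++ (y ++ z)) := by
  intro c hc
  obtain ⟨e, he, hec⟩ := hc
  have hemem : e ∈ x ++ y ++ z := by simp at he ⊢; tauto
  have hca : c ≠ a := hec ▸ hpure e hemem
  have hcbig : c ∈ chordSet (x ++ p :: (y ++ q :: z)) := by
    refine ⟨e, ?_, hec⟩
    simp at he ⊢; tauto
  obtain ⟨hcount, s, h1, h2⟩ := hg c hcbig
  have hpc : (p.1 == c) = false := by
    rw [hp]; exact beq_eq_false_iff_ne.mpr (fun h => hca h.symm)
  have hqc : (q.1 == c) = false := by
    rw [hq]; exact beq_eq_false_iff_ne.mpr (fun h => hca h.symm)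
  constructor
  · simp only [List.countP_append, List.countP_cons, hpc, hqc] at hcount ⊢
    simp at hcount ⊢
    omega
  · refine ⟨s, ?_, ?_⟩
    · have hne : (c, false, s) ≠ p := fun h => hca (by rw [← hp, ← h])
      have hne' : (c, false, s) ≠ q := fun h => hca (by rw [← hq, ← h])
      simp at h1 ⊢
      rcases h1 with h | h | h | h | h <;> first
        | (exact absurd h hne) | (exact absurd h hne') | tauto
    · have hne : (c, true, s) ≠ p := fun h => hca (by rw [← hp, ← h])
      have hne' : (c, true, s) ≠ q := fun h => hca (by rw [← hq, ← h])
      simp at h2 ⊢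
      rcases h2 with h | h | h | h | h <;> first
        | (exact absurd h hne) | (exact absurd h hne') | tauto

-- Part 7: trivialization of tails-first codes
lemma sublist_delete (x y z : GWord) (p q : GEntry) :
    (x ++ (y ++ z)).Sublist (x ++ p :: (y ++ q :: z)) := by
  refine List.Sublist.append_left ?_ x
  refine List.Sublist.cons _ ?_
  exact List.Sublist.append_left (List.sublist_cons_self q z) y

lemma trivTF : ∀ (N : ℕ) (w : GWord), w.length ≤ N → IsGaussCode w → TailsFirst w →
    WeldedEquiv w [] := by
  intro N
  induction N with
  | zero =>
      intro w hlen _ _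
      have : w = [] := List.length_eq_zero_iff.mp (Nat.le_zero.mp hlen)
      rw [this]; exact Relation.EqvGen.refl _
  | succ N ih =>
      intro w hlen hg htf
      rcases List.eq_nil_or_concat w with rfl | hne
      · exact Relation.EqvGen.refl _
      have hwne : w ≠ [] := by rintro rfl; obtain ⟨_, _, h⟩ := hne; simp at h
      have hpos : 0 < w.length := List.length_pos_iff.mpr hwne
      classical
      -- there is a head somewhere, take the first one
      obtain ⟨k, hk, hkhead, hkmin⟩ : ∃ k, ∃ hk : k < w.length, (w[k]).2.1 = true ∧
          ∀ p (hp : p < w.length), p < k → (w[p]).2.1 = false := by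
        have hex : ∃ m, ∃ hm : m < w.length, (w[m]).2.1 = true := by
          have ha0 : (w[0]).1 ∈ chordSet w := ⟨w[0], List.getElem_mem _, rfl⟩
          obtain ⟨_, s, _, hhd⟩ := hg _ ha0
          obtain ⟨m, hm, hwm⟩ := List.mem_iff_getElem.mp hhd
          exact ⟨m, hm, by rw [hwm]⟩
        obtain ⟨hk, hkhead⟩ := Nat.find_spec hex
        refine ⟨Nat.find hex, hk, hkhead, ?_⟩
        intro p hp hpk
        have := Nat.find_min hex hpk
        push_neg at this
        simpa using this hp
      set a := (w[k]).1 with hadef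
      have ha : a ∈ chordSet w := ⟨w[k], List.getElem_mem _, rfl⟩
      obtain ⟨s, i₀, j₀, hi₀, hj₀, hti, hhj, huniq⟩ := gauss_loc hg ha
      have hkj : k = j₀ := by
        rcases huniq k hk rfl with h | h
        · exfalso; subst h; rw [hti] at hkhead; simp at hkhead
        · exact h
      subst hkj
      have hik : i₀ ≠ k := by
        intro h; subst h; rw [hti] at hhj; simp at hhj
      have hilt : i₀ < k := by
        rcases Nat.lt_or_ge i₀ k with h | h
        · exact h
        · exfalso
          exact tailsFirst_indices htf (lt_of_le_of_ne h (Ne.symm hik)) hi₀ hhj hti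
      obtain ⟨x, y, z, hd, hxc, hyc, hzc⟩ := decomp_of_indices w hilt hk
      rw [hti, hhj] at hd
      have htails : ∀ e ∈ y, e.2.1 = false := by
        intro e he
        obtain ⟨p, hp, hip, hpk, rfl⟩ := hyc e he
        exact hkmin p hp hpk
      have hpure : ∀ e ∈ x ++ y ++ z, e.1 ≠ a := by
        intro e he hea
        rcases List.mem_append.mp he with he' | he'
        · rcases List.mem_append.mp he' with he'' | he''
          · obtain ⟨p, hp, hpi, rfl⟩ := hxc e he''
            rcases huniq p hp hea with rfl | rfl <;> omega
          · obtain ⟨p, hp, hip, hpk, rfl⟩ := hyc e he''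
            rcases huniq p hp hea with rfl | rfl <;> omega
        · obtain ⟨p, hp, hkp, rfl⟩ := hzc e he'
          rcases huniq p hp hea with rfl | rfl <;> omega
      have hbub : WeldedEquiv w (x ++ (y ++ z)) := by
        rw [hd]; exact bubbleT y x z a s htails hpure
      have hsub : (x ++ (y ++ z)).Sublist w := by
        rw [hd]; exact sublist_delete x y z _ _
      have hlen2 : (x ++ (y ++ z)).length ≤ N := by
        have : w.length = (x ++ (y ++ z)).length + 2 := by rw [hd]; simp; omega
        omega
      have hg2 : IsGaussCode (x ++ (y ++ z)) := by
        rw [hd] at hg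
        exact gauss_delete (p := (a, false, s)) (q := (a, true, s)) rfl rfl hg hpure
      have htf2 : TailsFirst (x ++ (y ++ z)) := tailsFirst_of_sublist hsub htf
      exact Relation.EqvGen.trans _ _ _ hbub (ih _ hlen2 hg2 htf2)

lemma getElem_rev2 {α : Type*} (l : List α) {i : ℕ} (h : i < l.length) :
    l[l.length - 1 - i]'(by omega) = l.reverse[i]'(by simpa using h) := by
  rw [List.getElem_reverse]

lemma getElem_rev' {α : Type*} (l : List α) {i : ℕ} (h : i < l.length) :
    l.reverse[l.length - 1 - i]'(by simp; omega) = l[i] := by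
  rw [List.getElem_reverse]
  congr 1
  omega

-- Part 8: trivialization of reverse-tails-first codes
lemma trivRevTF : ∀ (N : ℕ) (w : GWord), w.length ≤ N → IsGaussCode w →
    TailsFirst w.reverse → WeldedEquiv w [] := by
  intro N
  induction N with
  | zero =>
      intro w hlen _ _
      have : w = [] := List.length_eq_zero_iff.mp (Nat.le_zero.mp hlen)
      rw [this]; exact Relation.EqvGen.refl _
  | succ N ih =>
      intro w hlen hg htf
      rcases List.eq_nil_or_concat w with rfl | hne
      · exact Relation.EqvGen.refl _
      have hwne : w ≠ [] := by rintro rfl; obtain ⟨_, _, h⟩ := hne; simp at h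
      have hpos : 0 < w.length := List.length_pos_iff.mpr hwne
      classical
      -- take the last head of w, i.e. the first head of w.reverse
      obtain ⟨k, hk, hkhead, hkmax⟩ : ∃ k, ∃ hk : k < w.length, (w[k]).2.1 = true ∧
          ∀ p (hp : p < w.length), k < p → (w[p]).2.1 = false := by
        have hex : ∃ m, ∃ hm : m < w.reverse.length, (w.reverse[m]).2.1 = true := by
          have ha0 : (w[0]).1 ∈ chordSet w := ⟨w[0], List.getElem_mem _, rfl⟩
          obtain ⟨_, s, _, hhd⟩ := hg _ ha0
          have : (((w[0]).1 : ℕ), true, s) ∈ w.reverse := List.mem_reverse.mpr hhd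
          obtain ⟨m, hm, hwm⟩ := List.mem_iff_getElem.mp this
          exact ⟨m, hm, by rw [hwm]⟩
        obtain ⟨hk', hkhead'⟩ := Nat.find_spec hex
        have hklt : Nat.find hex < w.length := by simpa using hk'
        refine ⟨w.length - 1 - Nat.find hex, by omega, ?_, ?_⟩
        · rw [getElem_rev2 w hklt]
          exact hkhead'
        · intro p hp hkp
          have hrev : (w.reverse[w.length - 1 - p]'(by simp; omega)).2.1 = false := by
            have h5 := Nat.find_min hex (m := w.length - 1 - p) (by omega)
            push_neg at h5
            have h6 := h5 (by simp; omega)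
            exact Bool.not_eq_true _ ▸ h6
          rw [getElem_rev' w hp] at hrev
          exact hrev
      set a := (w[k]).1 with hadef
      have ha : a ∈ chordSet w := ⟨w[k], List.getElem_mem _, rfl⟩
      obtain ⟨s, i₀, j₀, hi₀, hj₀, hti, hhj, huniq⟩ := gauss_loc hg ha
      have hkj : k = j₀ := by
        rcases huniq k hk rfl with h | h
        · exfalso; subst h; rw [hti] at hkhead; simp at hkhead
        · exact h
      subst hkj
      have hik : i₀ ≠ k := by
        intro h; subst h; rw [hti] at hhj; simp at hhj
      have hilt : k < i₀ := by
        rcases Nat.lt_or_ge k i₀ with h | h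
        · exact h
        · exfalso
          have hlt : i₀ < k := lt_of_le_of_ne h hik
          -- in w.reverse, the head (at position L-1-k) comes before the tail (at L-1-i₀)
          have e1 : w.reverse[w.length - 1 - k]'(by simp; omega) = (a, true, s) := by
            rw [List.getElem_reverse]
            convert hhj using 2
            omega
          have e2 : w.reverse[w.length - 1 - i₀]'(by simp; omega) = (a, false, s) := by
            rw [List.getElem_reverse]
            convert hti using 2
            omega
          exact tailsFirst_indices htf (by omega : w.length - 1 - k < w.length - 1 - i₀)
            (by simp; omega) e1 e2
      obtain ⟨x, y, z, hd, hxc, hyc, hzc⟩ := decomp_of_indices w hilt hi₀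
      rw [hti, hhj] at hd
      have htails : ∀ e ∈ y, e.2.1 = false := by
        intro e he
        obtain ⟨p, hp, hkp, hpi, rfl⟩ := hyc e he
        exact hkmax p hp hkp
      have hpure : ∀ e ∈ x ++ y ++ z, e.1 ≠ a := by
        intro e he hea
        rcases List.mem_append.mp he with he' | he'
        · rcases List.mem_append.mp he' with he'' | he''
          · obtain ⟨p, hp, hpi, rfl⟩ := hxc e he''
            rcases huniq p hp hea with rfl | rfl <;> omega
          · obtain ⟨p, hp, hip, hpk, rfl⟩ := hyc e he''
            rcases huniq p hp hea with rfl | rfl <;> omega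
        · obtain ⟨p, hp, hkp, rfl⟩ := hzc e he'
          rcases huniq p hp hea with rfl | rfl <;> omega
      have hbub : WeldedEquiv w (x ++ (y ++ z)) := by
        rw [hd]; exact bubbleH y x z a s htails hpure
      have hsub : (x ++ (y ++ z)).Sublist w := by
        rw [hd]; exact sublist_delete x y z _ _
      have hlen2 : (x ++ (y ++ z)).length ≤ N := by
        have : w.length = (x ++ (y ++ z)).length + 2 := by rw [hd]; simp; omega
        omega
      have hg2 : IsGaussCode (x ++ (y ++ z)) := by
        rw [hd] at hg
        exact gauss_delete (p := (a, true, s)) (q := (a, false, s)) rfl rfl hg hpure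
      have htf2 : TailsFirst (x ++ (y ++ z)).reverse :=
        tailsFirst_of_sublist hsub.reverse htf
      exact Relation.EqvGen.trans _ _ _ hbub (ih _ hlen2 hg2 htf2)

-- Part 9: index congruence helper
lemma getElem_congr_idx' {α : Type*} (l : List α) {i j : ℕ} (h : i = j) (hj : j < l.length) :
    l[i]'(h ▸ hj) = l[j] := by subst h; rfl

-- Part 10: the key construction
lemma key_construction (D : GWord) (hD : IsGaussCode D) (hne : D ≠ [])
    (hn1 : 1 ≤ (chordSet D).ncard) :
    ∃ S : Finset ℕ, ↑S ⊆ chordSet D ∧ 2 * S.card + 1 ≤ (chordSet D).ncard ∧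
      IsDescending (crossingChange S D) ∧ WeldedEquiv (crossingChange S D) [] := by
  classical
  have hpos : 0 < D.length := List.length_pos_iff.mpr hne
  have hfin : (chordSet D).Finite := by
    apply Set.Finite.ofFinset (D.map Prod.fst).toFinset
    intro a
    simp only [List.mem_toFinset, List.mem_map, chordSet, Set.mem_setOf_eq]
  set F := hfin.toFinset with hFdef
  have hFmem : ∀ b, b ∈ F ↔ b ∈ chordSet D := fun b => Set.Finite.mem_toFinset hfin
  have hFcard : F.card = (chordSet D).ncard :=
    (Set.ncard_eq_toFinset_card _ hfin).symm
  -- choose a base chord and rotate its tail to the front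
  set a₀ := (D[0]'hpos).1 with ha₀def
  have ha₀ : a₀ ∈ chordSet D := ⟨D[0]'hpos, List.getElem_mem _, rfl⟩
  obtain ⟨s₀, r, j₂, hr, hj₂, htr, _, _⟩ := gauss_loc hD ha₀
  obtain ⟨w, hlenw, hgw, hcsw, ⟨h0w, hw0⟩, hccw⟩ :
      ∃ w : GWord, w.length = D.length ∧ IsGaussCode w ∧ chordSet w = chordSet D ∧
        (∃ h0 : 0 < w.length, w[0]'h0 = (a₀, false, s₀)) ∧
        ∀ S : Finset ℕ, crossingChange S w = (crossingChange S D).rotate r := by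
    refine ⟨D.rotate r, by simp, gauss_rotate hD r, chordSet_rotate D r, ⟨by simpa using hpos, ?_⟩, ?_⟩
    · rw [List.getElem_rotate]
      rw [getElem_congr_idx' D
        (by rw [Nat.zero_add, Nat.mod_eq_of_lt hr] : (0 + r) % D.length = r) hr]
      exact htr
    · intro S; exact cc_rotate S D r
  have hposw : 0 < w.length := by omega
  -- the bad set (head strictly before tail, reading forward)
  set Bad : ℕ → Prop := fun b => ∃ (i j : ℕ) (hij : i < j) (hj : j < w.length) (s s' : Bool),
    w[i]'(lt_trans hij hj) = (b, true, s) ∧ w[j] = (b, false, s') with hBaddef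
  set S : Finset ℕ := F.filter (fun b => Bad b) with hSdef
  set S' : Finset ℕ := F.filter (fun b => ¬ Bad b ∧ b ≠ a₀) with hS'def
  have ha₀w : a₀ ∈ chordSet w := hcsw ▸ ha₀
  -- a₀ is not bad
  have hnotbad : ¬ Bad a₀ := by
    obtain ⟨s₁, i₁, j₁, hi₁, hj₁, hti₁, hhj₁, huniq₁⟩ := gauss_loc hgw ha₀w
    have hi₁0 : i₁ = 0 := by
      rcases huniq₁ 0 (by omega) (by rw [hw0]) with h | h
      · omega
      · exfalso
        have h2 : w[0]'(by omega) = (a₀, true, s₁) := by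
          subst h; exact hhj₁
        rw [hw0] at h2; simp at h2
    rintro ⟨i, j, hij, hj, s, s', hh, ht⟩
    rcases huniq₁ j hj (by rw [ht]) with h | h
    · omega
    · exfalso; subst h
      rw [hhj₁] at ht; simp at ht
  have ha₀S : a₀ ∉ S := by
    rw [hSdef]; simp only [Finset.mem_filter]
    exact fun h => hnotbad h.2
  -- S and S' partition F.erase a₀
  have hunion : S ∪ S' = F.erase a₀ := by
    ext b
    simp only [hSdef, hS'def, Finset.mem_union, Finset.mem_filter, Finset.mem_erase]
    constructor
    · rintro (⟨hbF, hbBad⟩ | ⟨hbF, _, hba⟩)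
      · exact ⟨fun h => hnotbad (h ▸ hbBad), hbF⟩
      · exact ⟨hba, hbF⟩
    · rintro ⟨hba, hbF⟩
      by_cases hb : Bad b
      · exact Or.inl ⟨hbF, hb⟩
      · exact Or.inr ⟨hbF, hb, hba⟩
  have hdisj : Disjoint S S' := by
    rw [Finset.disjoint_left]
    intro b hb hb'
    rw [hSdef] at hb; rw [hS'def] at hb'
    simp only [Finset.mem_filter] at hb hb'
    exact hb'.2.1 hb.2
  have hcards : S.card + S'.card + 1 = (chordSet D).ncard := by
    have h1 : (S ∪ S').card = S.card + S'.card := Finset.card_union_of_disjoint hdisj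
    have h2 : (F.erase a₀).card = F.card - 1 :=
      Finset.card_erase_of_mem ((hFmem a₀).mpr ha₀)
    rw [hunion, h2] at h1
    rw [← hFcard]
    have : 1 ≤ F.card := by rw [hFcard]; exact hn1
    omega
  -- forward descending for S
  have hT1 : TailsFirst (crossingChange S w) := by
    by_contra h'
    obtain ⟨i, j, hij, hj, a, s, s', hvi, hvj⟩ := indices_of_not_tailsFirst h'
    have hjw : j < w.length := by rwa [length_cc] at hj
    have hiw : i < w.length := lt_trans hij hjw
    rw [getElem_cc] at hvi hvj
    have hia : (w[i]'hiw).1 = a := by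
      by_cases h : (w[i]'hiw).1 ∈ S
      · rw [if_pos h] at hvi; exact congrArg Prod.fst hvi
      · rw [if_neg h] at hvi; exact congrArg Prod.fst hvi
    have hja : (w[j]'hjw).1 = a := by
      by_cases h : (w[j]'hjw).1 ∈ S
      · rw [if_pos h] at hvj; exact congrArg Prod.fst hvj
      · rw [if_neg h] at hvj; exact congrArg Prod.fst hvj
    have haw : a ∈ chordSet w := ⟨w[i]'hiw, List.getElem_mem _, hia⟩
    obtain ⟨s₁, i₁, j₁, hi₁, hj₁, hti₁, hhj₁, huniq₁⟩ := gauss_loc hgw haw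
    by_cases haS : a ∈ S
    · rw [hia, if_pos haS] at hvi
      rw [hja, if_pos haS] at hvj
      have hwi : (w[i]'hiw).2.1 = false := by
        have h2 := congrArg (fun e => e.2.1) hvi
        simp at h2
        exact h2
      have hwj : (w[j]'hjw).2.1 = true := by
        have h2 := congrArg (fun e => e.2.1) hvj
        simp at h2
        exact h2
      have hii : i = i₁ := by
        rcases huniq₁ i hiw hia with h | h
        · exact h
        · exfalso; subst h; rw [hhj₁] at hwi; simp at hwi
      have hjj : j = j₁ := by
        rcases huniq₁ j hjw hja with h | h
        · exfalso; subst h; rw [hti₁] at hwj; simp at hwj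
        · exact h
      have hbad : Bad a := by
        have := haS; rw [hSdef] at this
        simp only [Finset.mem_filter] at this; exact this.2
      obtain ⟨i', j', hij', hj', t, t', hh', ht'⟩ := hbad
      have hi'j₁ : i' = j₁ := by
        rcases huniq₁ i' (lt_trans hij' hj') (by rw [hh']) with h | h
        · exfalso; subst h; rw [hti₁] at hh'; simp at hh'
        · exact h
      have hj'i₁ : j' = i₁ := by
        rcases huniq₁ j' hj' (by rw [ht']) with h | h
        · exact h
        · exfalso; subst h; rw [hhj₁] at ht'; simp at ht'
      omega
    · rw [hia, if_neg haS] at hvi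
      rw [hja, if_neg haS] at hvj
      have haF : a ∈ F := (hFmem a).mpr (hcsw ▸ haw)
      have hbada : Bad a := ⟨i, j, hij, hjw, s, s', hvi, hvj⟩
      have : a ∈ S := by rw [hSdef]; simp only [Finset.mem_filter]; exact ⟨haF, hbada⟩
      exact haS this
  -- backward descending for S'
  have hT2 : TailsFirst (((crossingChange S' w).rotate 1).reverse) := by
    by_contra h'
    obtain ⟨p, q, hpq, hq, a, s, s', hup, huq⟩ := indices_of_not_tailsFirst h'
    set u := (crossingChange S' w).rotate 1 with hudef
    have hlu : u.length = w.length := by rw [hudef]; simp [length_cc]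
    have hqu : q < u.length := by simpa using hq
    have hpu : p < u.length := by omega
    have huj : u[u.length - 1 - p]'(by omega) = (a, true, s) :=
      (getElem_rev2 u hpu).trans hup
    have hui : u[u.length - 1 - q]'(by omega) = (a, false, s') :=
      (getElem_rev2 u hqu).trans huq
    set i := u.length - 1 - q with hidef
    set j := u.length - 1 - p with hjdef
    have hij : i < j := by omega
    have hju : j < u.length := by omega
    have hiu : i < u.length := by omega
    -- translate through the rotation
    have hrot : ∀ (t : ℕ) (ht : t < u.length),
        u[t] = (crossingChange S' w)[(t + 1) % w.length]'
          (by rw [length_cc]; exact Nat.mod_lt _ hposw) := by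
      intro t ht
      simp only [hudef]
      rw [List.getElem_rotate]
      rw [getElem_congr_idx' _ (by rw [length_cc] : (t + 1) % (crossingChange S' w).length
        = (t + 1) % w.length) (by rw [length_cc]; exact Nat.mod_lt _ hposw)]
    by_cases hjtop : j = u.length - 1
    · -- the head would be at position 0 of v, but there sits the tail of a₀
      have h0 : (j + 1) % w.length = 0 := by
        rw [hjtop]; rw [hlu]
        rw [Nat.sub_add_cancel hposw, Nat.mod_self]
      have h1 := (hrot j hju).symm.trans huj
      rw [getElem_congr_idx' _ h0 (by rw [length_cc]; omega)] at h1
      rw [getElem_cc] at h1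
      have hw0' := hw0
      by_cases h2 : (w[0]'(by omega)).1 ∈ S'
      · exfalso
        rw [hw0] at h2
        simp only at h2
        have : a₀ ∈ S' := h2
        rw [hS'def] at this
        simp only [Finset.mem_filter] at this
        exact this.2.2 rfl
      · rw [if_neg h2, hw0] at h1
        simp at h1
    · have hj1 : (j + 1) % w.length = j + 1 := Nat.mod_eq_of_lt (by omega)
      have hi1 : (i + 1) % w.length = i + 1 := Nat.mod_eq_of_lt (by omega)
      have hvj : (crossingChange S' w)[j + 1]'(by rw [length_cc]; omega) = (a, true, s) := by
        have h1 := (hrot j hju).symm.trans huj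
        rwa [getElem_congr_idx' _ hj1 (by rw [length_cc]; omega)] at h1
      have hvi : (crossingChange S' w)[i + 1]'(by rw [length_cc]; omega) = (a, false, s') := by
        have h1 := (hrot i hiu).symm.trans hui
        rwa [getElem_congr_idx' _ hi1 (by rw [length_cc]; omega)] at h1
      rw [getElem_cc] at hvi hvj
      have hja : (w[j + 1]'(by omega)).1 = a := by
        by_cases h : (w[j + 1]'(by omega)).1 ∈ S'
        · rw [if_pos h] at hvj; exact congrArg Prod.fst hvj
        · rw [if_neg h] at hvj; exact congrArg Prod.fst hvj
      have hia : (w[i + 1]'(by omega)).1 = a := by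
        by_cases h : (w[i + 1]'(by omega)).1 ∈ S'
        · rw [if_pos h] at hvi; exact congrArg Prod.fst hvi
        · rw [if_neg h] at hvi; exact congrArg Prod.fst hvi
      have haw : a ∈ chordSet w := ⟨w[i + 1]'(by omega), List.getElem_mem _, hia⟩
      obtain ⟨s₁, i₁, j₁, hi₁, hj₁, hti₁, hhj₁, huniq₁⟩ := gauss_loc hgw haw
      have hi₁0 : a = a₀ → i₁ = 0 := by
        intro h
        rcases huniq₁ 0 (by omega) (by rw [hw0]; exact h.symm) with h' | h'
        · omega
        · exfalso
          have h2 := (getElem_congr_idx' w h' hj₁).trans hhj₁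
          have h3 := hw0.symm.trans h2
          simp at h3
      by_cases haS : a ∈ S'
      · -- flipped: head at i+1, tail at j+1 in w, so Bad a; but S' contains only non-bad
        rw [hia, if_pos haS] at hvi
        rw [hja, if_pos haS] at hvj
        have hwi : (w[i + 1]'(by omega)).2.1 = true := by
          have h2 := congrArg (fun e => e.2.1) hvi; simp at h2; exact h2
        have hwj : (w[j + 1]'(by omega)).2.1 = false := by
          have h2 := congrArg (fun e => e.2.1) hvj; simp at h2; exact h2
        have hii : i + 1 = j₁ := by
          rcases huniq₁ (i + 1) (by omega) hia with h | h
          · exfalso; subst h; rw [hti₁] at hwi; simp at hwi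
          · exact h
        have hjj : j + 1 = i₁ := by
          rcases huniq₁ (j + 1) (by omega) hja with h | h
          · exact h
          · exfalso; subst h; rw [hhj₁] at hwj; simp at hwj
        have hbada : Bad a := by
          refine ⟨i + 1, j + 1, by omega, by omega, s₁, s₁, ?_, ?_⟩
          · have : w[i + 1]'(by omega) = (a, true, s₁) := by
              have := hti₁; subst hii; exact hhj₁
            exact this
          · have : w[j + 1]'(by omega) = (a, false, s₁) := by
              subst hjj; exact hti₁
            exact this
        have := haS; rw [hS'def] at this
        simp only [Finset.mem_filter] at this
        exact this.2.1 hbada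
      · rw [hia, if_neg haS] at hvi
        rw [hja, if_neg haS] at hvj
        -- unflipped: tail at i+1, head at j+1; so a is not bad; also a ≠ a₀
        have hii : i + 1 = i₁ := by
          rcases huniq₁ (i + 1) (by omega) hia with h | h
          · exact h
          · exfalso; subst h; rw [hhj₁] at hvi; simp at hvi
        have hjj : j + 1 = j₁ := by
          rcases huniq₁ (j + 1) (by omega) hja with h | h
          · exfalso; subst h; rw [hti₁] at hvj; simp at hvj
          · exact h
        have hne₀ : a ≠ a₀ := by
          intro h
          have := hi₁0 h
          omega
        have haF : a ∈ F := (hFmem a).mpr (hcsw ▸ haw)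
        have hnb : ¬ Bad a := by
          rintro ⟨i', j', hij', hj', t, t', hh', ht'⟩
          have hi'j₁ : i' = j₁ := by
            rcases huniq₁ i' (lt_trans hij' hj') (by rw [hh']) with h | h
            · exfalso; subst h; rw [hti₁] at hh'; simp at hh'
            · exact h
          have hj'i₁ : j' = i₁ := by
            rcases huniq₁ j' hj' (by rw [ht']) with h | h
            · exact h
            · exfalso; subst h; rw [hhj₁] at ht'; simp at ht'
          omega
        have : a ∈ S' := by
          rw [hS'def]; simp only [Finset.mem_filter]; exact ⟨haF, hnb, hne₀⟩
        exact haS this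
  -- assemble
  have hSsub : ∀ T : Finset ℕ, T ⊆ F → ↑T ⊆ chordSet D := by
    intro T hT b hb
    exact (hFmem b).mp (hT hb)
  by_cases hwhich : S.card ≤ S'.card
  · refine ⟨S, hSsub S (Finset.filter_subset _ _), by omega, ⟨r, Or.inl ?_⟩, ?_⟩
    · rw [← hccw S]; exact hT1
    · have hcc : crossingChange S w = (crossingChange S D).rotate r := hccw S
      have hgcc : IsGaussCode (crossingChange S w) := gauss_cc hgw S
      have htriv : WeldedEquiv (crossingChange S w) [] :=
        trivTF (crossingChange S w).length _ le_rfl hgcc hT1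
      have hrot : WeldedEquiv (crossingChange S D) (crossingChange S w) := by
        rw [hcc]; exact weldedEquiv_rotate _ r
      exact Relation.EqvGen.trans _ _ _ hrot htriv
  · refine ⟨S', hSsub S' (Finset.filter_subset _ _), by omega, ⟨r + 1, Or.inr ?_⟩, ?_⟩
    · have : (crossingChange S' D).rotate (r + 1) = (crossingChange S' w).rotate 1 := by
        rw [hccw S', List.rotate_rotate]
      rw [this]; exact hT2
    · have hcc : (crossingChange S' D).rotate (r + 1) = (crossingChange S' w).rotate 1 := by
        rw [hccw S', List.rotate_rotate]
      have hgcc : IsGaussCode ((crossingChange S' w).rotate 1) :=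
        gauss_rotate (gauss_cc hgw S') 1
      have htriv : WeldedEquiv ((crossingChange S' w).rotate 1) [] :=
        trivRevTF ((crossingChange S' w).rotate 1).length _ le_rfl hgcc hT2
      have hrot : WeldedEquiv (crossingChange S' D) ((crossingChange S' w).rotate 1) := by
        rw [← hcc]; exact weldedEquiv_rotate _ (r + 1)
      exact Relation.EqvGen.trans _ _ _ hrot htriv

/-- For every Gauss code `D` with `n ≥ 1` chords there exists
a set `S` of chords of `D` with `|S| ≤ (n - 1)/2` such that the crossing change
at `S` turns `D` into a descending code; consequently `u(D) ≤ (n - 1)/2`. -/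
theorem small_crossing_change_descending (D : GWord) (hD : IsGaussCode D)
    (n : ℕ) (hn : (chordSet D).ncard = n) (hn1 : 1 ≤ n) :
    (∃ S : Finset ℕ, ↑S ⊆ chordSet D ∧ ((S.card : ℝ) ≤ ((n : ℝ) - 1) / 2) ∧
       IsDescending (crossingChange S D)) ∧
    (unknottingNumWord D : ℝ) ≤ ((n : ℝ) - 1) / 2 := by
  have hDne : D ≠ [] := by
    rintro rfl
    have hcs : chordSet ([] : GWord) = ∅ := by
      ext a; simp [chordSet]
    rw [hcs] at hn
    simp at hn
    omega
  obtain ⟨S, hsub, hbound, hdesc, hequiv⟩ :=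
    key_construction D hD hDne (by omega : 1 ≤ (chordSet D).ncard)
  rw [hn] at hbound
  have hR : (S.card : ℝ) ≤ ((n : ℝ) - 1) / 2 := by
    have h2 := (Nat.cast_le (α := ℝ)).mpr hbound
    push_cast at h2
    linarith
  have hmem : S.card ∈ {k : ℕ | ∃ T : Finset ℕ, ↑T ⊆ chordSet D ∧ T.card = k ∧
      WeldedEquiv (crossingChange T D) []} := ⟨S, hsub, rfl, hequiv⟩
  have hle : unknottingNumWord D ≤ S.card := Nat.sInf_le hmem
  exact ⟨⟨S, hsub, hR, hdesc⟩,
    le_trans ((Nat.cast_le (α := ℝ)).mpr hle) hR⟩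
end

section
/- Let D be a Gauss code with chord set C and let x ∈ C with tail endpoint t. Let S₁ be the set of chords of D whose head occurs before its tail when the cyclic word is cut at t and read forward (starting with t), and let S₂ be the set of chords of D whose head occurs before its tail when the cyclic word is cut at t and read in the reverse direction (starting with t). Then S₁ and S₂ are disjoint, S₁ ∪ S₂ = C \ {x}, and the crossing change at S₁ (respectively at S₂) transforms D into a descending Gauss code. -/
def Pat (b₁ b₂ : Bool) (a : ℕ) (l : GWord) : Prop :=
  ∃ (u v w : GWord) (s₁ s₂ : Bool),
    l = u ++ (a, b₁, s₁) :: (v ++ (a, b₂, s₂) :: w)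

lemma pat_cons_iff {b₁ b₂ : Bool} {a x : ℕ} {b s : Bool} {l : GWord} (hax : a ≠ x) :
    Pat b₁ b₂ a ((x, b, s) :: l) ↔ Pat b₁ b₂ a l := by
  constructor
  · rintro ⟨u, v, w, s₁, s₂, h⟩
    cases u with
    | nil =>
      simp only [List.nil_append, List.cons.injEq, Prod.mk.injEq] at h
      exact absurd h.1.1.symm hax
    | cons e u' =>
      simp only [List.cons_append, List.cons.injEq] at h
      exact ⟨u', v, w, s₁, s₂, h.2⟩
  · rintro ⟨u, v, w, s₁, s₂, h⟩
    exact ⟨(x, b, s) :: u, v, w, s₁, s₂, by simp [h]⟩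

lemma pat_reverse {b₁ b₂ : Bool} {a : ℕ} {l : GWord} (h : Pat b₁ b₂ a l) :
    Pat b₂ b₁ a l.reverse := by
  obtain ⟨u, v, w, s₁, s₂, rfl⟩ := h
  exact ⟨w.reverse, v.reverse, u.reverse, s₂, s₁, by simp⟩

lemma pat_mem {b₁ b₂ : Bool} {a : ℕ} {l : GWord} (h : Pat b₁ b₂ a l) :
    ∃ e ∈ l, e.1 = a := by
  obtain ⟨u, v, w, s₁, s₂, rfl⟩ := h
  exact ⟨(a, b₁, s₁), by simp, rfl⟩

lemma pat_total {a : ℕ} {σ : Bool} {l : GWord}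
    (h₁ : (a, false, σ) ∈ l) (h₂ : (a, true, σ) ∈ l) :
    Pat true false a l ∨ Pat false true a l := by
  obtain ⟨p, q, rfl⟩ := List.append_of_mem h₁
  rw [List.mem_append, List.mem_cons] at h₂
  rcases h₂ with h | h | h
  · obtain ⟨p₁, p₂, rfl⟩ := List.append_of_mem h
    exact Or.inl ⟨p₁, p₂, q, σ, σ, by simp⟩
  · simp at h
  · obtain ⟨q₁, q₂, rfl⟩ := List.append_of_mem h
    exact Or.inr ⟨p, q₁, q₂, σ, σ, by simp⟩

lemma pat_filter {b₁ b₂ : Bool} {a : ℕ} {l : GWord}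
    (hc : l.countP (fun e => e.1 == a) = 2) (h : Pat b₁ b₂ a l) :
    ∃ s₁ s₂ : Bool, l.filter (fun e => e.1 == a) = [(a, b₁, s₁), (a, b₂, s₂)] := by
  obtain ⟨u, v, w, s₁, s₂, rfl⟩ := h
  simp only [List.countP_append, List.countP_cons] at hc
  simp only [beq_self_eq_true, if_pos] at hc
  have hu : u.countP (fun e => e.1 == a) = 0 := by omega
  have hv : v.countP (fun e => e.1 == a) = 0 := by omega
  have hw : w.countP (fun e => e.1 == a) = 0 := by omega
  refine ⟨s₁, s₂, ?_⟩
  rw [List.filter_append, List.filter_cons, List.filter_append, List.filter_cons,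
    List.filter_eq_nil_iff.mpr (List.countP_eq_zero.mp hu),
    List.filter_eq_nil_iff.mpr (List.countP_eq_zero.mp hv),
    List.filter_eq_nil_iff.mpr (List.countP_eq_zero.mp hw)]
  simp

lemma pat_excl {a : ℕ} {l : GWord} (hc : l.countP (fun e => e.1 == a) = 2)
    (h₁ : Pat true false a l) (h₂ : Pat false true a l) : False := by
  obtain ⟨s₁, s₂, e₁⟩ := pat_filter hc h₁
  obtain ⟨t₁, t₂, e₂⟩ := pat_filter hc h₂
  rw [e₁] at e₂
  simp at e₂

lemma pat_crossing {S : Finset ℕ} {a : ℕ} {l : GWord} {b₁ b₂ : Bool}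
    (h : Pat b₁ b₂ a (crossingChange S l)) :
    (a ∈ S ∧ Pat (!b₁) (!b₂) a l) ∨ (a ∉ S ∧ Pat b₁ b₂ a l) := by
  obtain ⟨u, v, w, s₁, s₂, h⟩ := h
  unfold crossingChange at h
  rw [List.map_eq_append_iff] at h
  obtain ⟨u₀, r₀, rfl, hu, h⟩ := h
  rw [List.map_eq_cons_iff] at h
  obtain ⟨e₁, r₁, rfl, he₁, h⟩ := h
  rw [List.map_eq_append_iff] at h
  obtain ⟨v₀, r₂, rfl, hv, h⟩ := h
  rw [List.map_eq_cons_iff] at h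
  obtain ⟨e₂, w₀, rfl, he₂, hw⟩ := h
  have key : ∀ (e : GEntry) (b sb : Bool),
      (if e.1 ∈ S then (e.1, !e.2.1, !e.2.2) else e) = (a, b, sb) →
      (a ∈ S → e = (a, !b, !sb)) ∧ (a ∉ S → e = (a, b, sb)) := by
    rintro ⟨a', c, d⟩ b sb h
    by_cases hm : a' ∈ S
    · rw [if_pos hm] at h
      simp only [Prod.mk.injEq] at h
      obtain ⟨rfl, hb, hs⟩ := h
      refine ⟨fun _ => ?_, fun hn => absurd hm hn⟩
      cases c <;> cases d <;> cases b <;> cases sb <;> simp_all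
    · rw [if_neg hm] at h
      simp only [Prod.mk.injEq] at h
      obtain ⟨rfl, rfl, rfl⟩ := h
      exact ⟨fun hmem => absurd hmem hm, fun _ => rfl⟩
  obtain ⟨h1S, h1N⟩ := key e₁ b₁ s₁ (by simpa using he₁)
  obtain ⟨h2S, h2N⟩ := key e₂ b₂ s₂ (by simpa using he₂)
  by_cases hmem : a ∈ S
  · exact Or.inl ⟨hmem, u₀, v₀, w₀, !s₁, !s₂, by rw [h1S hmem, h2S hmem]⟩
  · exact Or.inr ⟨hmem, u₀, v₀, w₀, s₁, s₂, by rw [h1N hmem, h2N hmem]⟩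

lemma tailsFirst_crossing {W : GWord} {S : Finset ℕ}
    (hcnt : ∀ a, (∃ e ∈ W, e.1 = a) → W.countP (fun e => e.1 == a) = 2)
    (hS : ∀ a, a ∈ S ↔ Pat true false a W) :
    TailsFirst (crossingChange S W) := by
  rintro ⟨u, v, w, a, s₁, s₂, h⟩
  have hp : Pat true false a (crossingChange S W) := ⟨u, v, w, s₁, s₂, h⟩
  rcases pat_crossing hp with ⟨hmem, hpat⟩ | ⟨hmem, hpat⟩
  · simp only [Bool.not_true, Bool.not_false] at hpat
    exact pat_excl (hcnt a (pat_mem hpat)) ((hS a).mp hmem) hpat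
  · exact hmem ((hS a).mpr hpat)

lemma not_pat_cons_self {x : ℕ} {s : Bool} {l : GWord}
    (hc : l.countP (fun e => e.1 == x) = 1) :
    ¬ Pat true false x ((x, false, s) :: l) := by
  rintro ⟨u, v, w, s₁, s₂, h⟩
  cases u with
  | nil => simp at h
  | cons e u' =>
    simp only [List.cons_append, List.cons.injEq] at h
    rw [h.2] at hc
    simp only [List.countP_append, List.countP_cons, beq_self_eq_true, if_pos] at hc
    omega

/-- Let `D` be a Gauss code and `x` a chord of `D` with tail
endpoint `t`; cut the cyclic word at `t`, so that (after a rotation) the word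
reads `(x, false, s) :: rest`.  Let `S₁` be the set of chords whose head occurs
before its tail reading forward from `t`, and `S₂` the set of chords whose
head occurs before its tail reading in the reverse direction from `t` (i.e. in
the word `(x, false, s) :: rest.reverse`).  Then `S₁` and `S₂` are disjoint,
`S₁ ∪ S₂ = C \ {x}` where `C` is the chord set of `D`, and the crossing change
at `S₁` (respectively at `S₂`) transforms `D` into a descending code. -/
theorem two_descending_crossing_changes (D : GWord) (hD : IsGaussCode D)
    (x : ℕ) (s : Bool) (n : ℕ) (rest : GWord)
    (hcut : D.rotate n = (x, false, s) :: rest)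
    (S₁ S₂ : Finset ℕ)
    (hS₁ : ∀ a : ℕ, a ∈ S₁ ↔ ∃ (u v w : GWord) (s₁ s₂ : Bool),
      (x, false, s) :: rest = u ++ (a, true, s₁) :: (v ++ (a, false, s₂) :: w))
    (hS₂ : ∀ a : ℕ, a ∈ S₂ ↔ ∃ (u v w : GWord) (s₁ s₂ : Bool),
      (x, false, s) :: rest.reverse = u ++ (a, true, s₁) :: (v ++ (a, false, s₂) :: w)) :
    Disjoint S₁ S₂ ∧
    (↑S₁ ∪ ↑S₂ : Set ℕ) = chordSet D \ {x} ∧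
    IsDescending (crossingChange S₁ D) ∧
    IsDescending (crossingChange S₂ D) := by
  set w : GWord := (x, false, s) :: rest with hw
  set w' : GWord := (x, false, s) :: rest.reverse with hw'
  have hperm : w.Perm D := hcut ▸ (D.rotate_perm n)
  have hperm' : w'.Perm w := List.Perm.cons _ rest.reverse_perm
  have hS₁P : ∀ a, a ∈ S₁ ↔ Pat true false a w := hS₁
  have hS₂P : ∀ a, a ∈ S₂ ↔ Pat true false a w' := hS₂
  have hcntw : ∀ a, (∃ e ∈ w, e.1 = a) → w.countP (fun e => e.1 == a) = 2 := by
    rintro a ⟨e, he, hea⟩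
    rw [hperm.countP_eq]
    exact (hD a ⟨e, hperm.mem_iff.mp he, hea⟩).1
  have hcntw' : ∀ a, (∃ e ∈ w', e.1 = a) → w'.countP (fun e => e.1 == a) = 2 := by
    rintro a ⟨e, he, hea⟩
    rw [hperm'.countP_eq]
    exact hcntw a ⟨e, hperm'.mem_iff.mp he, hea⟩
  have hx2 : w.countP (fun e => e.1 == x) = 2 := hcntw x ⟨(x, false, s), by simp [hw], rfl⟩
  have hx1 : rest.countP (fun e => e.1 == x) = 1 := by
    rw [hw, List.countP_cons] at hx2
    simp at hx2
    omega
  have hx1' : rest.reverse.countP (fun e => e.1 == x) = 1 := by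
    rw [List.countP_reverse]; exact hx1
  have hxS₁ : x ∉ S₁ := fun h => not_pat_cons_self hx1 ((hS₁P x).mp h)
  have hxS₂ : x ∉ S₂ := fun h => not_pat_cons_self hx1' ((hS₂P x).mp h)
  refine ⟨?_, ?_, ?_, ?_⟩
  · refine Finset.disjoint_left.mpr fun {a} ha₁ ha₂ => ?_
    have hp1 : Pat true false a w := (hS₁P a).mp ha₁
    have hax : a ≠ x := fun h => hxS₁ (h ▸ ha₁)
    have hp2r : Pat true false a rest.reverse := (pat_cons_iff hax).mp ((hS₂P a).mp ha₂)
    have hp2 : Pat false true a rest := by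
      have := pat_reverse hp2r; rwa [List.reverse_reverse] at this
    exact pat_excl (hcntw a (pat_mem hp1)) hp1 ((pat_cons_iff hax).mpr hp2)
  · ext a
    simp only [Set.mem_union, Finset.mem_coe, Set.mem_diff, Set.mem_singleton_iff]
    constructor
    · rintro (h | h)
      · obtain ⟨e, he, hea⟩ := pat_mem ((hS₁P a).mp h)
        exact ⟨⟨e, hperm.mem_iff.mp he, hea⟩, fun hax => hxS₁ (hax ▸ h)⟩
      · obtain ⟨e, he, hea⟩ := pat_mem ((hS₂P a).mp h)
        exact ⟨⟨e, hperm.mem_iff.mp (hperm'.mem_iff.mp he), hea⟩,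
          fun hax => hxS₂ (hax ▸ h)⟩
    · rintro ⟨ha, hax⟩
      obtain ⟨-, σ, ht, hh⟩ := hD a ha
      rcases pat_total (hperm.mem_iff.mpr ht) (hperm.mem_iff.mpr hh) with hp | hp
      · exact Or.inl ((hS₁P a).mpr hp)
      · refine Or.inr ((hS₂P a).mpr ((pat_cons_iff hax).mpr ?_))
        exact pat_reverse ((pat_cons_iff hax).mp hp)
  · refine ⟨n, Or.inl ?_⟩
    have : (crossingChange S₁ D).rotate n = crossingChange S₁ w := by
      unfold crossingChange
      rw [← List.map_rotate, hcut]
    rw [this]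
    exact tailsFirst_crossing hcntw hS₁P
  · refine ⟨n + 1, Or.inr ?_⟩
    have hkey : ((crossingChange S₂ D).rotate (n + 1)).reverse = crossingChange S₂ w' := by
      rw [← List.rotate_rotate]
      unfold crossingChange
      rw [← List.map_rotate, hcut, hw, List.map_cons, if_neg hxS₂]
      rw [show (1 : ℕ) = 0 + 1 from rfl, List.rotate_cons_succ, List.rotate_zero]
      simp [hw', hxS₂, List.map_reverse]
    rw [hkey]
    exact tailsFirst_crossing hcntw' hS₂P
end
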